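/- Let f(λ) = ∑ᵢ arctan λᵢ on the set E = {λ ∈ ℝⁿ : ∑ᵢ arctan λᵢ ≥ (n−2)π/2 + δ} for some δ > 0. Then there exists A > 0 (depending only on δ and n) such that g(λ) = −exp(−A f(λ)) is a concave function on E; equivalently, the Hessian matrix ∂²g/∂λᵢ∂λⱼ = −A e^{−Af} (A + 2λᵢδ_{ij})/((1+λᵢ²)(1+λⱼ²)) is negative semidefinite at every point of E. -/

import Mathlib

open Real Finset


lemma tan_add_le {a b : ℝ} (ha : 0 ≤ a) (hb : 0 ≤ b) (hab : a + b < π / 2) :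
    tan a + tan b ≤ tan (a + b) := by
  have hca : 0 < cos a := cos_pos_of_mem_Ioo ⟨by nlinarith [pi_pos], by linarith⟩
  have hcb : 0 < cos b := cos_pos_of_mem_Ioo ⟨by nlinarith [pi_pos], by linarith⟩
  have hcab : 0 < cos (a + b) := cos_pos_of_mem_Ioo ⟨by nlinarith [pi_pos], by linarith⟩
  have hsab : 0 ≤ sin (a + b) := sin_nonneg_of_nonneg_of_le_pi (by linarith) (by nlinarith [pi_pos])
  have hsa : 0 ≤ sin a := sin_nonneg_of_nonneg_of_le_pi ha (by nlinarith [pi_pos])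
  have hsb : 0 ≤ sin b := sin_nonneg_of_nonneg_of_le_pi hb (by nlinarith [pi_pos])
  have e : tan a + tan b = sin (a + b) / (cos a * cos b) := by
    rw [tan_eq_sin_div_cos, tan_eq_sin_div_cos, div_add_div _ _ hca.ne' hcb.ne', sin_add]
  rw [e, tan_eq_sin_div_cos, div_le_div_iff₀ (mul_pos hca hcb) hcab]
  nlinarith [cos_add a b, mul_nonneg hsa hsb]

lemma tan_sum_le {ι : Type*} (s : Finset ι) (θ : ι → ℝ) (h0 : ∀ i ∈ s, 0 ≤ θ i)
    (hs : ∑ i ∈ s, θ i < π / 2) : ∑ i ∈ s, tan (θ i) ≤ tan (∑ i ∈ s, θ i) := by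
  induction s using Finset.cons_induction with
  | empty => simp
  | cons a s ha ih =>
    rw [Finset.sum_cons] at hs ⊢
    rw [Finset.sum_cons]
    have h0s : 0 ≤ ∑ i ∈ s, θ i := Finset.sum_nonneg fun i hi => h0 i (Finset.mem_cons_of_mem hi)
    have h0a : 0 ≤ θ a := h0 a (Finset.mem_cons_self a s)
    have := ih (fun i hi => h0 i (Finset.mem_cons_of_mem hi)) (by linarith)
    have h2 := tan_add_le h0a h0s hs
    linarith

lemma tan_mul_tan_lt {t S : ℝ} (ht : 0 ≤ t) (hS : 0 ≤ S) (hts : t + S < π / 2) :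
    tan t * tan S < 1 := by
  have hct : 0 < cos t := cos_pos_of_mem_Ioo ⟨by nlinarith [pi_pos], by linarith⟩
  have hcS : 0 < cos S := cos_pos_of_mem_Ioo ⟨by nlinarith [pi_pos], by linarith⟩
  have hcts : 0 < cos (t + S) := cos_pos_of_mem_Ioo ⟨by nlinarith [pi_pos], by linarith⟩
  have := cos_add t S
  rw [tan_eq_sin_div_cos, tan_eq_sin_div_cos, div_mul_div_comm, div_lt_one (mul_pos hct hcS)]
  nlinarith


lemma CSfin {ι : Type*} (s : Finset ι) (lam u : ι → ℝ) (hpos : ∀ i ∈ s, 0 < lam i) :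
    (∑ i ∈ s, u i) ^ 2 ≤ (∑ i ∈ s, (lam i)⁻¹) * (∑ i ∈ s, lam i * u i ^ 2) := by
  have h := sum_mul_sq_le_sq_mul_sq s (fun i => Real.sqrt ((lam i)⁻¹))
      (fun i => Real.sqrt (lam i) * u i)
  have e1 : ∀ i ∈ s, Real.sqrt ((lam i)⁻¹) * (Real.sqrt (lam i) * u i) = u i := by
    intro i hi
    rw [Real.sqrt_inv, inv_mul_cancel_left₀ (Real.sqrt_ne_zero'.2 (hpos i hi))]
  have e2 : ∀ i ∈ s, (Real.sqrt ((lam i)⁻¹)) ^ 2 = (lam i)⁻¹ := fun i hi =>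
    Real.sq_sqrt (inv_nonneg.2 (hpos i hi).le)
  have e3 : ∀ i ∈ s, (Real.sqrt (lam i) * u i) ^ 2 = lam i * u i ^ 2 := by
    intro i hi
    rw [mul_pow, Real.sq_sqrt (hpos i hi).le]
  rwa [Finset.sum_congr rfl e1, Finset.sum_congr rfl e2, Finset.sum_congr rfl e3] at h


set_option maxHeartbeats 1000000 in
lemma key {m : ℕ} (lam u : Fin m → ℝ) (j : Fin m) (hu : u j = 0)
    (h : ((m : ℝ) - 2) * (π / 2) < ∑ i, arctan (lam i)) :
    0 ≤ ∑ i, lam i * u i ^ 2 + lam j * (∑ i, u i) ^ 2 := by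
  by_cases hex : ∀ i, 0 ≤ lam i
  · have h1 : 0 ≤ ∑ i, lam i * u i ^ 2 :=
      Finset.sum_nonneg fun i _ => mul_nonneg (hex i) (sq_nonneg _)
    have h2 : 0 ≤ lam j * (∑ i, u i) ^ 2 := mul_nonneg (hex j) (sq_nonneg _)
    linarith
  push_neg at hex
  obtain ⟨k, hk⟩ := hex
  set t : ℝ := -arctan (lam k) with ht_def
  have ht : 0 < t := by
    have : arctan (lam k) < arctan 0 := arctan_strictMono hk
    rw [arctan_zero] at this; rw [ht_def]; linarith
  have hslt : ∀ i, arctan (lam i) < π / 2 := fun i => arctan_lt_pi_div_two _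
  have hcardn : (Finset.univ.erase k).card = m - 1 := by
    rw [Finset.card_erase_of_mem (Finset.mem_univ k), Finset.card_univ, Fintype.card_fin]
  have hm1 : 1 ≤ m := Fin.pos k
  have hcard : ((Finset.univ.erase k).card : ℝ) = (m : ℝ) - 1 := by
    rw [hcardn]; push_cast [Nat.cast_sub hm1]; ring
  have hsum_split : arctan (lam k) + ∑ i ∈ Finset.univ.erase k, arctan (lam i)
      = ∑ i, arctan (lam i) := by
    rw [add_comm]; exact Finset.sum_erase_add _ _ (Finset.mem_univ k)
  have hbudget : t + ∑ i ∈ Finset.univ.erase k, (π / 2 - arctan (lam i)) < π / 2 := by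
    rw [Finset.sum_sub_distrib, Finset.sum_const, nsmul_eq_mul, hcard, ht_def]
    nlinarith [hsum_split, h]
  have hθnn : ∀ i ∈ Finset.univ.erase k, 0 ≤ π / 2 - arctan (lam i) :=
    fun i _ => by linarith [hslt i]
  have hθsum_nn : 0 ≤ ∑ i ∈ Finset.univ.erase k, (π / 2 - arctan (lam i)) :=
    Finset.sum_nonneg hθnn
  have hpos : ∀ i ∈ Finset.univ.erase k, 0 < lam i := by
    intro i hi
    have hle : π / 2 - arctan (lam i) ≤ ∑ l ∈ Finset.univ.erase k, (π / 2 - arctan (lam l)) :=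
      Finset.single_le_sum hθnn hi
    have h2 : 0 < arctan (lam i) := by linarith
    by_contra hcon
    push_neg at hcon
    have : arctan (lam i) ≤ arctan 0 := arctan_strictMono.monotone hcon
    rw [arctan_zero] at this; linarith
  have htan_s : ∀ i ∈ Finset.univ.erase k, tan (π / 2 - arctan (lam i)) = (lam i)⁻¹ := by
    intro i _
    rw [tan_pi_div_two_sub, tan_arctan]
  have htan_t : tan t = -lam k := by
    rw [ht_def, tan_neg, tan_arctan]
  have htpos : 0 < tan t := by rw [htan_t]; linarith
  have hsup : ∑ i ∈ Finset.univ.erase k, (lam i)⁻¹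
      ≤ tan (∑ i ∈ Finset.univ.erase k, (π / 2 - arctan (lam i))) := by
    have := tan_sum_le (Finset.univ.erase k) (fun i => π / 2 - arctan (lam i)) hθnn
      (by linarith)
    rwa [Finset.sum_congr rfl htan_s] at this
  have hTnn : 0 ≤ ∑ i ∈ Finset.univ.erase k, (lam i)⁻¹ :=
    Finset.sum_nonneg fun i hi => (inv_nonneg).2 (hpos i hi).le
  have hbound : tan t * ∑ i ∈ Finset.univ.erase k, (lam i)⁻¹ ≤ 1 := by
    have h1 : tan t * ∑ i ∈ Finset.univ.erase k, (lam i)⁻¹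
        ≤ tan t * tan (∑ i ∈ Finset.univ.erase k, (π / 2 - arctan (lam i))) :=
      mul_le_mul_of_nonneg_left hsup htpos.le
    have h2 := tan_mul_tan_lt ht.le hθsum_nn hbudget
    linarith
  by_cases hjk : j = k
  · subst hjk
    have hsplit1 : ∑ i ∈ Finset.univ.erase j, lam i * u i ^ 2 = ∑ i, lam i * u i ^ 2 := by
      rw [← Finset.sum_erase_add Finset.univ _ (Finset.mem_univ j), hu]
      ring
    have hsplit2 : ∑ i ∈ Finset.univ.erase j, u i = ∑ i, u i := by
      rw [← Finset.sum_erase_add Finset.univ _ (Finset.mem_univ j), hu, add_zero]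
    have hCS := CSfin (Finset.univ.erase j) lam u hpos
    have hSB : 0 ≤ ∑ i ∈ Finset.univ.erase j, lam i * u i ^ 2 :=
      Finset.sum_nonneg fun i hi => mul_nonneg (hpos i hi).le (sq_nonneg _)
    rw [← hsplit1, ← hsplit2]
    have hlamj : lam j = -tan t := by rw [htan_t]; ring
    rw [hlamj]
    nlinarith [mul_le_mul_of_nonneg_left hCS htpos.le,
      mul_le_mul_of_nonneg_right hbound hSB]
  · have hjmem : j ∈ Finset.univ.erase k := Finset.mem_erase.2 ⟨hjk, Finset.mem_univ j⟩
    set s0 := (Finset.univ.erase k).erase j with hs0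
    have hpos0 : ∀ i ∈ s0, 0 < lam i := fun i hi => hpos i (Finset.mem_of_mem_erase hi)
    set a := u k with ha
    set w := ∑ i ∈ s0, u i with hw
    set Sl := ∑ i ∈ s0, lam i * u i ^ 2 with hSl
    set Tj := (lam j)⁻¹ with hTj
    set T2 := ∑ i ∈ s0, (lam i)⁻¹ with hT2
    have hpj : 0 < lam j := hpos j hjmem
    have hTjpos : 0 < Tj := by rw [hTj]; exact inv_pos.2 hpj
    have hpTj : lam j * Tj = 1 := by rw [hTj]; exact mul_inv_cancel₀ hpj.ne'
    have hT2nn : 0 ≤ T2 := Finset.sum_nonneg fun i hi => (inv_nonneg).2 (hpos0 i hi).le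
    have hSlnn : 0 ≤ Sl := Finset.sum_nonneg fun i hi => mul_nonneg (hpos0 i hi).le (sq_nonneg _)
    have hCS : w ^ 2 ≤ T2 * Sl := CSfin s0 lam u hpos0
    have hTsplit : Tj + T2 = ∑ i ∈ Finset.univ.erase k, (lam i)⁻¹ := by
      rw [hT2, hTj, add_comm]
      exact Finset.sum_erase_add _ _ hjmem
    have husplit : ∑ i, u i = a + w := by
      rw [← Finset.sum_erase_add Finset.univ _ (Finset.mem_univ k),
        ← Finset.sum_erase_add (Finset.univ.erase k) _ hjmem, hu, ← hs0, ← hw, ← ha]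
      ring
    have hlamsplit : ∑ i, lam i * u i ^ 2 = lam k * a ^ 2 + Sl := by
      rw [← Finset.sum_erase_add Finset.univ _ (Finset.mem_univ k),
        ← Finset.sum_erase_add (Finset.univ.erase k) _ hjmem, hu, ← hs0, ← hSl, ← ha]
      ring
    have hbound2 : tan t * (Tj + T2) ≤ 1 := by rw [hTsplit]; exact hbound
    rw [husplit, hlamsplit]
    have hlamk : lam k = -tan t := by rw [htan_t]; ring
    rw [hlamk]
    rcases eq_or_lt_of_le hT2nn with hT0 | hT0
    · have hw0 : w = 0 := by nlinarith [hCS, sq_nonneg w]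
      have htle : tan t ≤ lam j := by
        have h1 : tan t * Tj ≤ 1 := by nlinarith
        calc tan t = tan t * Tj * lam j := by rw [hTj]; field_simp
          _ ≤ 1 * lam j := mul_le_mul_of_nonneg_right h1 hpj.le
          _ = lam j := one_mul _
      have h2 : tan t * a ^ 2 ≤ lam j * a ^ 2 := mul_le_mul_of_nonneg_right htle (sq_nonneg a)
      simp only [hw0, add_zero]
      nlinarith [h2, hSlnn]
    · have hkey : Tj * tan t * a ^ 2 ≤ Tj * Sl + (a + w) ^ 2 := by
        have c1 : (Tj + T2) * (Tj * w ^ 2) ≤ (Tj + T2) * (Tj * (T2 * Sl)) := by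
          apply mul_le_mul_of_nonneg_left _ (by linarith)
          exact mul_le_mul_of_nonneg_left hCS hTjpos.le
        have c2 : tan t * (Tj + T2) * (Tj * T2 * a ^ 2) ≤ 1 * (Tj * T2 * a ^ 2) := by
          apply mul_le_mul_of_nonneg_right hbound2
          positivity
        have hfac : 0 < (Tj + T2) * T2 := by positivity
        have hmain : 0 ≤ ((Tj + T2) * T2) * (Tj * Sl + (a + w) ^ 2 - Tj * tan t * a ^ 2) := by
          nlinarith [sq_nonneg (Tj * w + T2 * (a + w)), c1, c2]
        have := (mul_nonneg_iff_of_pos_left hfac).1 hmain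
        linarith
      have hkey2 : tan t * a ^ 2 ≤ Sl + lam j * (a + w) ^ 2 := by
        have h1 := mul_le_mul_of_nonneg_left hkey hpj.le
        have e1 : lam j * (Tj * tan t * a ^ 2) = tan t * a ^ 2 := by
          rw [hTj]; field_simp
        have e2 : lam j * (Tj * Sl + (a + w) ^ 2) = Sl + lam j * (a + w) ^ 2 := by
          rw [hTj]; field_simp
        rw [e1, e2] at h1
        exact h1
      linarith


section derivs
variable {m : ℕ} (x v : Fin m → ℝ)

lemma hasDerivAt_psi (τ : ℝ) :
    HasDerivAt (fun σ => ∑ i, arctan (x i + σ * v i))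
      (∑ i, v i * (1 + (x i + τ * v i) ^ 2)⁻¹) τ := by
  have h : ∀ i ∈ Finset.univ, HasDerivAt (fun σ : ℝ => arctan (x i + σ * v i))
      (v i * (1 + (x i + τ * v i) ^ 2)⁻¹) τ := by
    intro i _
    have haff : HasDerivAt (fun σ : ℝ => x i + σ * v i) (v i) τ := by
      simpa using (((hasDerivAt_id τ).mul_const (v i)).const_add (x i))
    have := haff.arctan
    convert this using 1
    rw [one_div]
    ring
  exact HasDerivAt.fun_sum h

lemma hasDerivAt_psi1 (τ : ℝ) :
    HasDerivAt (fun σ => ∑ i, v i * (1 + (x i + σ * v i) ^ 2)⁻¹)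
      (∑ i, (-2) * ((x i + τ * v i) * (v i * (1 + (x i + τ * v i) ^ 2)⁻¹) ^ 2)) τ := by
  have h : ∀ i ∈ Finset.univ, HasDerivAt (fun σ : ℝ => v i * (1 + (x i + σ * v i) ^ 2)⁻¹)
      ((-2) * ((x i + τ * v i) * (v i * (1 + (x i + τ * v i) ^ 2)⁻¹) ^ 2)) τ := by
    intro i _
    have haff : HasDerivAt (fun σ : ℝ => x i + σ * v i) (v i) τ := by
      simpa using (((hasDerivAt_id τ).mul_const (v i)).const_add (x i))
    have hsq : HasDerivAt (fun σ : ℝ => 1 + (x i + σ * v i) ^ 2)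
        (2 * (x i + τ * v i) ^ 1 * v i) τ := (haff.pow 2).const_add 1
    have hne : (1 + (x i + τ * v i) ^ 2) ≠ 0 := by positivity
    have hinv := hsq.inv hne
    have := hinv.const_mul (v i)
    convert this using 1
    · rfl
    · rfl
    · rfl
    · rw [div_eq_mul_inv, ← inv_pow]; ring
  exact HasDerivAt.fun_sum h




lemma concave_seg {A : ℝ} (hA : 0 < A)
    (hkey : ∀ τ ∈ Set.Icc (0:ℝ) 1,
      -2 * ∑ i, ((x i + τ * v i) * (v i * (1 + (x i + τ * v i) ^ 2)⁻¹) ^ 2)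
        ≤ A * (∑ i, v i * (1 + (x i + τ * v i) ^ 2)⁻¹) ^ 2) :
    ConcaveOn ℝ (Set.Icc (0:ℝ) 1)
      (fun τ => -Real.exp (-A * ∑ i, arctan (x i + τ * v i))) := by
  set ψ : ℝ → ℝ := fun σ => ∑ i, arctan (x i + σ * v i) with hψ
  set ψ1 : ℝ → ℝ := fun σ => ∑ i, v i * (1 + (x i + σ * v i) ^ 2)⁻¹ with hψ1
  set ψ2 : ℝ → ℝ := fun σ => ∑ i, (-2) * ((x i + σ * v i) * (v i * (1 + (x i + σ * v i) ^ 2)⁻¹) ^ 2)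
    with hψ2
  set φ : ℝ → ℝ := fun σ => -Real.exp (-A * ψ σ) with hφ
  set φ1 : ℝ → ℝ := fun σ => -(Real.exp (-A * ψ σ) * (-A * ψ1 σ)) with hφ1
  set φ2 : ℝ → ℝ := fun σ =>
    -((Real.exp (-A * ψ σ) * (-A * ψ1 σ)) * (-A * ψ1 σ) + Real.exp (-A * ψ σ) * (-A * ψ2 σ))
    with hφ2
  have hdφ : ∀ τ, HasDerivAt φ (φ1 τ) τ := by
    intro τ
    have h1 : HasDerivAt (fun σ => -A * ψ σ) (-A * ψ1 τ) τ :=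
      (hasDerivAt_psi x v τ).const_mul (-A)
    exact (h1.exp).neg
  have hdφ1 : ∀ τ, HasDerivAt φ1 (φ2 τ) τ := by
    intro τ
    have h1 : HasDerivAt (fun σ => -A * ψ σ) (-A * ψ1 τ) τ :=
      (hasDerivAt_psi x v τ).const_mul (-A)
    have h2 : HasDerivAt (fun σ => Real.exp (-A * ψ σ)) (Real.exp (-A * ψ τ) * (-A * ψ1 τ)) τ :=
      h1.exp
    have h3 : HasDerivAt (fun σ => -A * ψ1 σ) (-A * ψ2 τ) τ :=
      (hasDerivAt_psi1 x v τ).const_mul (-A)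
    exact (h2.mul h3).neg
  have hderiv : deriv φ = φ1 := funext fun τ => (hdφ τ).deriv
  apply concaveOn_of_deriv2_nonpos (convex_Icc 0 1)
  · exact fun τ _ => ((hdφ τ).continuousAt).continuousWithinAt
  · exact fun τ _ => ((hdφ τ).differentiableAt).differentiableWithinAt
  · rw [hderiv]
    exact fun τ _ => ((hdφ1 τ).differentiableAt).differentiableWithinAt
  · intro τ hτ
    rw [interior_Icc] at hτ
    have e1 : deriv^[2] φ τ = φ2 τ := by
      show deriv (deriv^[1] φ) τ = φ2 τ
      rw [Function.iterate_one, hderiv]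
      exact (hdφ1 τ).deriv
    rw [e1]
    have hk := hkey τ ⟨hτ.1.le, hτ.2.le⟩
    have hE : 0 < Real.exp (-A * ψ τ) := Real.exp_pos _
    have hψ2e : ψ2 τ = -2 * ∑ i, ((x i + τ * v i) * (v i * (1 + (x i + τ * v i) ^ 2)⁻¹) ^ 2) := by
      rw [hψ2, Finset.mul_sum]
    have h4 : ψ2 τ ≤ A * (ψ1 τ) ^ 2 := by rw [hψ2e]; exact hk
    have h5 := mul_le_mul_of_nonneg_left h4 (le_of_lt (mul_pos hA hE))
    have e2 : φ2 τ = -(Real.exp (-A * ψ τ) * (-A * ψ1 τ) * (-A * ψ1 τ)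
        + Real.exp (-A * ψ τ) * (-A * ψ2 τ)) := rfl
    rw [e2]
    nlinarith [h5]



lemma convex_seg_tan (c : ℝ)
    (hrange : ∀ τ ∈ Set.Icc (0:ℝ) 1,
      c - ∑ i, arctan (x i + τ * v i) ∈ Set.Ioo (-(π/2)) (π/2))
    (hkey : ∀ τ ∈ Set.Icc (0:ℝ) 1,
      0 ≤ ∑ i, ((x i + τ * v i) * (v i * (1 + (x i + τ * v i) ^ 2)⁻¹) ^ 2)
        + tan (c - ∑ i, arctan (x i + τ * v i))
          * (∑ i, v i * (1 + (x i + τ * v i) ^ 2)⁻¹) ^ 2) :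
    ConvexOn ℝ (Set.Icc (0:ℝ) 1)
      (fun τ => tan (c - ∑ i, arctan (x i + τ * v i))) := by
  set ψ : ℝ → ℝ := fun σ => ∑ i, arctan (x i + σ * v i) with hψ
  set ψ1 : ℝ → ℝ := fun σ => ∑ i, v i * (1 + (x i + σ * v i) ^ 2)⁻¹ with hψ1
  set ψ2 : ℝ → ℝ := fun σ => ∑ i, (-2) * ((x i + σ * v i) * (v i * (1 + (x i + σ * v i) ^ 2)⁻¹) ^ 2)
    with hψ2
  set φ : ℝ → ℝ := fun σ => tan (c - ψ σ) with hφ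
  set φ1 : ℝ → ℝ := fun σ => (1 + tan (c - ψ σ) ^ 2) * (-ψ1 σ) with hφ1
  set φ2 : ℝ → ℝ := fun σ =>
    (2 * tan (c - ψ σ) ^ 1 * ((1 + tan (c - ψ σ) ^ 2) * (-ψ1 σ))) * (-ψ1 σ)
      + (1 + tan (c - ψ σ) ^ 2) * (-ψ2 σ) with hφ2
  set U : Set ℝ := (fun σ => c - ψ σ) ⁻¹' (Set.Ioo (-(π/2)) (π/2)) with hU
  have hψcont : Continuous ψ := by
    have : Differentiable ℝ ψ := fun τ => (hasDerivAt_psi x v τ).differentiableAt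
    exact this.continuous
  have hUopen : IsOpen U := (IsOpen.preimage (by continuity) isOpen_Ioo)
  have hIccU : Set.Icc (0:ℝ) 1 ⊆ U := fun τ hτ => hrange τ hτ
  have hdψc : ∀ τ, HasDerivAt (fun σ => c - ψ σ) (-ψ1 τ) τ := fun τ =>
    (hasDerivAt_psi x v τ).const_sub c
  have hcos : ∀ τ ∈ U, cos (c - ψ τ) ≠ 0 := by
    intro τ hτ
    exact (cos_pos_of_mem_Ioo hτ).ne'
  have hdφ : ∀ τ ∈ U, HasDerivAt φ (φ1 τ) τ := by
    intro τ hτ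
    have h1 := (Real.hasDerivAt_tan (hcos τ hτ)).comp τ (hdψc τ)
    have e : 1 / cos (c - ψ τ) ^ 2 = 1 + tan (c - ψ τ) ^ 2 := by
      rw [one_div, ← Real.inv_one_add_tan_sq (hcos τ hτ), inv_inv]
    rw [e] at h1
    exact h1
  have hdφ1 : ∀ τ ∈ U, HasDerivAt φ1 (φ2 τ) τ := by
    intro τ hτ
    have h1 : HasDerivAt (fun σ => 1 + tan (c - ψ σ) ^ 2)
        (2 * tan (c - ψ τ) ^ 1 * ((1 + tan (c - ψ τ) ^ 2) * (-ψ1 τ))) τ :=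
      (((hdφ τ hτ).pow 2).const_add 1)
    have h2 : HasDerivAt (fun σ => -ψ1 σ) (-ψ2 τ) τ := (hasDerivAt_psi1 x v τ).neg
    exact h1.mul h2
  have hderiv : ∀ τ ∈ U, deriv φ τ = φ1 τ := fun τ hτ => (hdφ τ hτ).deriv
  apply convexOn_of_deriv2_nonneg (convex_Icc 0 1)
  · exact fun τ hτ => ((hdφ τ (hIccU hτ)).continuousAt).continuousWithinAt
  · rw [interior_Icc]
    exact fun τ hτ =>
      ((hdφ τ (hIccU (Set.Ioo_subset_Icc_self hτ))).differentiableAt).differentiableWithinAt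
  · rw [interior_Icc]
    intro τ hτ
    have hτU : τ ∈ U := hIccU (Set.Ioo_subset_Icc_self hτ)
    have hev : deriv φ =ᶠ[nhds τ] φ1 :=
      Filter.eventuallyEq_of_mem (hUopen.mem_nhds hτU) (fun y hy => hderiv y hy)
    have := (hdφ1 τ hτU).congr_of_eventuallyEq hev
    exact this.differentiableAt.differentiableWithinAt
  · rw [interior_Icc]
    intro τ hτ
    have hτU : τ ∈ U := hIccU (Set.Ioo_subset_Icc_self hτ)
    have hev : deriv φ =ᶠ[nhds τ] φ1 :=
      Filter.eventuallyEq_of_mem (hUopen.mem_nhds hτU) (fun y hy => hderiv y hy)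
    have hd2 := (hdφ1 τ hτU).congr_of_eventuallyEq hev
    have e1 : deriv^[2] φ τ = φ2 τ := by
      show deriv (deriv^[1] φ) τ = φ2 τ
      rw [Function.iterate_one]
      exact hd2.deriv
    rw [e1]
    have hk := hkey τ ⟨hτ.1.le, hτ.2.le⟩
    have hψ2e : ψ2 τ = -2 * ∑ i, ((x i + τ * v i) * (v i * (1 + (x i + τ * v i) ^ 2)⁻¹) ^ 2) := by
      rw [hψ2, Finset.mul_sum]
    have e2 : φ2 τ = (2 * tan (c - ψ τ) ^ 1 * ((1 + tan (c - ψ τ) ^ 2) * (-ψ1 τ))) * (-ψ1 τ)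
      + (1 + tan (c - ψ τ) ^ 2) * (-ψ2 τ) := rfl
    rw [e2]
    have hpos : (0:ℝ) < 1 + tan (c - ψ τ) ^ 2 := by positivity
    have hk2 : 0 ≤ (∑ i, ((x i + τ * v i) * (v i * (1 + (x i + τ * v i) ^ 2)⁻¹) ^ 2))
        + tan (c - ψ τ) * (ψ1 τ) ^ 2 := hk
    nlinarith [mul_le_mul_of_nonneg_left hk2 hpos.le, hψ2e]
end derivs


lemma arctan_le_iff {θ : ℝ} (s : ℝ) (h1 : -(π/2) < θ) (h2 : θ < π/2) :
    θ ≤ arctan s ↔ tan θ ≤ s := by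
  constructor
  · intro h
    have := strictMonoOn_tan.monotoneOn ⟨h1, h2⟩
      ⟨neg_pi_div_two_lt_arctan s, arctan_lt_pi_div_two s⟩ h
    rwa [tan_arctan] at this
  · intro h
    have := arctan_strictMono.monotone h
    rwa [arctan_tan h1 h2] at this

lemma sum_arctan_ub {n : ℕ} (w : Fin n → ℝ) : ∑ i, arctan (w i) ≤ (n : ℝ) * (π / 2) := by
  calc ∑ i, arctan (w i) ≤ ∑ _i : Fin n, π / 2 :=
        Finset.sum_le_sum fun i _ => (arctan_lt_pi_div_two _).le
    _ = (n : ℝ) * (π / 2) := by rw [Finset.sum_const, Finset.card_univ, Fintype.card_fin,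
        nsmul_eq_mul]

lemma seg_mem_aux {n : ℕ} {D : Set (Fin n → ℝ)} (hD : Convex ℝ D) {p q : Fin n → ℝ}
    (hp : p ∈ D) (hq : q ∈ D) {τ : ℝ} (hτ : τ ∈ Set.Icc (0:ℝ) 1) :
    (fun i => p i + τ * (q i - p i)) ∈ D := by
  have h := hD hp hq (by linarith [hτ.1, hτ.2] : (0:ℝ) ≤ 1 - τ) hτ.1 (by ring)
  convert h using 1
  funext i
  simp [Pi.add_apply, Pi.smul_apply, smul_eq_mul]
  ring

lemma tan_level_convexOn {n : ℕ} (c : ℝ) (hc : ((n:ℝ) - 1) * (π / 2) < c)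
    (hD : Convex ℝ {z : Fin n → ℝ | c - π / 2 < ∑ i, arctan (z i)}) :
    ConvexOn ℝ {z : Fin n → ℝ | c - π / 2 < ∑ i, arctan (z i)}
      (fun z => tan (c - ∑ i, arctan (z i))) := by
  refine ⟨hD, fun p hp q hq a b ha hb hab => ?_⟩
  set v : Fin n → ℝ := fun i => q i - p i with hv
  have hseg : ∀ τ ∈ Set.Icc (0:ℝ) 1,
      c - π / 2 < ∑ i, arctan (p i + τ * v i) := by
    intro τ hτ
    exact seg_mem_aux hD hp hq hτ
  have hrange : ∀ τ ∈ Set.Icc (0:ℝ) 1,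
      c - ∑ i, arctan (p i + τ * v i) ∈ Set.Ioo (-(π/2)) (π/2) := by
    intro τ hτ
    constructor
    · have := sum_arctan_ub (fun i => p i + τ * v i)
      have hπ : 0 < π := pi_pos
      nlinarith
    · have := hseg τ hτ
      linarith
  have hkey : ∀ τ ∈ Set.Icc (0:ℝ) 1,
      0 ≤ ∑ i, ((p i + τ * v i) * (v i * (1 + (p i + τ * v i) ^ 2)⁻¹) ^ 2)
        + tan (c - ∑ i, arctan (p i + τ * v i))
          * (∑ i, v i * (1 + (p i + τ * v i) ^ 2)⁻¹) ^ 2 := by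
    intro τ hτ
    set w : Fin n → ℝ := fun i => p i + τ * v i with hw
    set θ : ℝ := c - ∑ i, arctan (w i) with hθ
    have hθmem : θ ∈ Set.Ioo (-(π/2)) (π/2) := hrange τ hτ
    set lam : Fin (n+1) → ℝ := Fin.snoc w (tan θ) with hlam
    set u : Fin (n+1) → ℝ := Fin.snoc (fun i => v i * (1 + (w i) ^ 2)⁻¹) 0 with hu
    have hu0 : u (Fin.last n) = 0 := by rw [hu, Fin.snoc_last]
    have hsum : ∑ i, arctan (lam i) = c := by
      rw [Fin.sum_univ_castSucc]
      simp only [hlam, Fin.snoc_castSucc, Fin.snoc_last]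
      rw [arctan_tan hθmem.1 hθmem.2, hθ]
      ring
    have hk := key lam u (Fin.last n) hu0 (by
      rw [hsum]
      push_cast
      linarith)
    rw [Fin.sum_univ_castSucc, Fin.sum_univ_castSucc] at hk
    simp only [hlam, hu, Fin.snoc_castSucc, Fin.snoc_last] at hk
    calc (0:ℝ) ≤ _ := hk
      _ = ∑ i, (w i * (v i * (1 + (w i) ^ 2)⁻¹) ^ 2)
        + tan θ * (∑ i, v i * (1 + (w i) ^ 2)⁻¹) ^ 2 := by ring
  have hcv := convex_seg_tan p v c hrange hkey
  have h0 : (0:ℝ) ∈ Set.Icc (0:ℝ) 1 := by constructor <;> norm_num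
  have h1 : (1:ℝ) ∈ Set.Icc (0:ℝ) 1 := by constructor <;> norm_num
  have hcomb := hcv.2 h0 h1 ha hb hab
  have hb' : a • (0:ℝ) + b • (1:ℝ) = b := by simp [smul_eq_mul]
  rw [hb'] at hcomb
  have e0 : (fun τ => tan (c - ∑ i, arctan (p i + τ * v i))) 0
      = tan (c - ∑ i, arctan (p i)) := by simp
  have e1 : (fun τ => tan (c - ∑ i, arctan (p i + τ * v i))) 1
      = tan (c - ∑ i, arctan (q i)) := by
    show tan (c - ∑ i, arctan (p i + 1 * v i)) = tan (c - ∑ i, arctan (q i))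
    congr 1
    congr 1
    apply Finset.sum_congr rfl
    intro i _
    congr 1
    show p i + 1 * (q i - p i) = q i
    ring
  have eb : (fun τ => tan (c - ∑ i, arctan (p i + τ * v i))) b
      = tan (c - ∑ i, arctan ((a • p + b • q) i)) := by
    show tan (c - ∑ i, arctan (p i + b * v i)) = tan (c - ∑ i, arctan ((a • p + b • q) i))
    congr 1
    congr 1
    apply Finset.sum_congr rfl
    intro i _
    congr 1
    have hab' : a = 1 - b := by linarith
    show p i + b * (q i - p i) = a • p i + b • q i
    rw [smul_eq_mul, smul_eq_mul, hab']
    ring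
  rw [e0, e1, eb] at hcomb
  show tan (c - ∑ i, arctan ((a • p + b • q) i))
      ≤ a • tan (c - ∑ i, arctan (p i)) + b • tan (c - ∑ i, arctan (q i))
  rw [smul_eq_mul, smul_eq_mul]
  exact hcomb


lemma conv_level : ∀ (n : ℕ) (c : ℝ), ((n:ℝ) - 2) * (π / 2) < c →
    Convex ℝ {lam : Fin n → ℝ | c ≤ ∑ i, arctan (lam i)} := by
  intro n
  induction n with
  | zero =>
    intro c _ x hx y hy a b ha hb hab
    simp only [Set.mem_setOf_eq, Finset.univ_eq_empty, Finset.sum_empty] at hx ⊢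
    exact hx
  | succ n ih =>
    intro c hc x hx y hy a b ha hb hab
    have hπ : 0 < π := pi_pos
    have hc' : ((n:ℝ) - 1) * (π / 2) < c := by push_cast at hc; linarith
    -- the domain in one lower dimension
    set D : Set (Fin n → ℝ) := {z | c - π / 2 < ∑ i, arctan (z i)} with hD_def
    have hD : Convex ℝ D := by
      intro z hz w hw a' b' ha' hb' hab'
      rcases le_total (∑ i, arctan (z i)) (∑ i, arctan (w i)) with hle | hle
      · have hz1 : z ∈ {lam : Fin n → ℝ | (∑ i, arctan (z i)) ≤ ∑ i, arctan (lam i)} := by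
          simp only [Set.mem_setOf_eq]; exact le_refl _
        have hw1 : w ∈ {lam : Fin n → ℝ | (∑ i, arctan (z i)) ≤ ∑ i, arctan (lam i)} := hle
        have h1 := ih (∑ i, arctan (z i)) (by
          have := hz; simp only [hD_def, Set.mem_setOf_eq] at this; linarith)
          hz1 hw1 ha' hb' hab'
        simp only [Set.mem_setOf_eq] at h1 ⊢
        have := hz; simp only [hD_def, Set.mem_setOf_eq] at this
        exact lt_of_lt_of_le this h1
      · have hz1 : z ∈ {lam : Fin n → ℝ | (∑ i, arctan (w i)) ≤ ∑ i, arctan (lam i)} := hle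
        have hw1 : w ∈ {lam : Fin n → ℝ | (∑ i, arctan (w i)) ≤ ∑ i, arctan (lam i)} := by
          simp only [Set.mem_setOf_eq]; exact le_refl _
        have h1 := ih (∑ i, arctan (w i)) (by
          have := hw; simp only [hD_def, Set.mem_setOf_eq] at this; linarith)
          hz1 hw1 ha' hb' hab'
        simp only [Set.mem_setOf_eq] at h1 ⊢
        have := hw; simp only [hD_def, Set.mem_setOf_eq] at this
        exact lt_of_lt_of_le this h1
    have hcvx := tan_level_convexOn c hc' hD
    -- split x and y
    have hsplit : ∀ lam : Fin (n+1) → ℝ, ∑ i, arctan (lam i)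
        = ∑ i : Fin n, arctan (lam i.castSucc) + arctan (lam (Fin.last n)) := by
      intro lam
      rw [Fin.sum_univ_castSucc]
    have hmemD : ∀ lam : Fin (n+1) → ℝ, c ≤ ∑ i, arctan (lam i) →
        (fun i : Fin n => lam i.castSucc) ∈ D := by
      intro lam hlam
      simp only [hD_def, Set.mem_setOf_eq]
      rw [hsplit lam] at hlam
      have := arctan_lt_pi_div_two (lam (Fin.last n))
      linarith
    have hxD := hmemD x hx
    have hyD := hmemD y hy
    have hzD : (fun i : Fin n => (a • x + b • y) i.castSucc) ∈ D := by
      have := hD hxD hyD ha hb hab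
      convert this using 1
      funext i
      simp [Pi.add_apply, Pi.smul_apply]
    -- bounds for θ at the combination point
    have hθub : ∀ z' : Fin n → ℝ, z' ∈ D → c - ∑ i, arctan (z' i) ∈ Set.Ioo (-(π/2)) (π/2) := by
      intro z' hz'
      constructor
      · have := sum_arctan_ub z'
        nlinarith
      · have := hz'; simp only [hD_def, Set.mem_setOf_eq] at this; linarith
    -- endpoint inequalities : tan (c - F x') ≤ x_last
    have hend : ∀ lam : Fin (n+1) → ℝ, c ≤ ∑ i, arctan (lam i) →
        tan (c - ∑ i : Fin n, arctan (lam i.castSucc)) ≤ lam (Fin.last n) := by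
      intro lam hlam
      have hmem := hmemD lam hlam
      have hio := hθub _ hmem
      rw [← arctan_le_iff _ hio.1 hio.2]
      rw [hsplit lam] at hlam
      linarith
    have hx' := hend x hx
    have hy' := hend y hy
    have hcomb := hcvx.2 hxD hyD ha hb hab
    have ecomb : (fun i : Fin n => (a • x + b • y) i.castSucc)
        = a • (fun i : Fin n => x i.castSucc) + b • (fun i : Fin n => y i.castSucc) := by
      funext i
      simp [Pi.add_apply, Pi.smul_apply]
    -- assemble
    simp only [Set.mem_setOf_eq]
    rw [hsplit]
    have hio := hθub _ hzD
    have h1 : tan (c - ∑ i : Fin n, arctan ((a • x + b • y) i.castSucc))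
        ≤ (a • x + b • y) (Fin.last n) := by
      have h2 : (a • x + b • y) (Fin.last n) = a * x (Fin.last n) + b * y (Fin.last n) := by
        simp [Pi.add_apply, Pi.smul_apply, smul_eq_mul]
      rw [h2]
      calc tan (c - ∑ i : Fin n, arctan ((a • x + b • y) i.castSucc))
          ≤ a • tan (c - ∑ i : Fin n, arctan (x i.castSucc))
            + b • tan (c - ∑ i : Fin n, arctan (y i.castSucc)) := by
            have h5 := hcomb
            rw [← ecomb] at h5
            exact h5
        _ ≤ a * x (Fin.last n) + b * y (Fin.last n) := by
            rw [smul_eq_mul, smul_eq_mul]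
            have := mul_le_mul_of_nonneg_left hx' ha
            have := mul_le_mul_of_nonneg_left hy' hb
            linarith
    have h3 : c - ∑ i : Fin n, arctan ((a • x + b • y) i.castSucc)
        ≤ arctan ((a • x + b • y) (Fin.last n)) := by
      rw [arctan_le_iff _ hio.1 hio.2]
      exact h1
    linarith


theorem stmt7 (n : ℕ) (hn : 2 ≤ n) (δ : ℝ) (hδ : 0 < δ) :
    ∃ A > (0 : ℝ), ConcaveOn ℝ
      {lam : Fin n → ℝ | ((n : ℝ) - 2) * (π / 2) + δ ≤ ∑ i, Real.arctan (lam i)}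
      (fun lam => -Real.exp (-A * ∑ i, Real.arctan (lam i))) := by
  have hπ : 0 < π := pi_pos
  set d : ℝ := min δ (π / 2) with hd_def
  have hd0 : 0 < d := lt_min hδ (by linarith)
  have hdδ : d ≤ δ := min_le_left _ _
  have hdπ : d ≤ π / 2 := min_le_right _ _
  have hang1 : -(π/2) < π / 2 - d / 2 := by linarith
  have hang2 : π / 2 - d / 2 < π / 2 := by linarith
  set A : ℝ := 2 * tan (π / 2 - d / 2) with hA_def
  have htanpos : 0 < tan (π / 2 - d / 2) :=
    tan_pos_of_pos_of_lt_pi_div_two (by linarith) hang2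
  have hA : 0 < A := by rw [hA_def]; linarith
  have harc : arctan (A / 2) = π / 2 - d / 2 := by
    have : A / 2 = tan (π / 2 - d / 2) := by rw [hA_def]; ring
    rw [this, arctan_tan hang1 hang2]
  set c : ℝ := ((n : ℝ) - 2) * (π / 2) + δ with hc_def
  have hE : Convex ℝ {lam : Fin n → ℝ | c ≤ ∑ i, arctan (lam i)} :=
    conv_level n c (by rw [hc_def]; linarith)
  refine ⟨A, hA, hE, ?_⟩
  intro p hp q hq a b ha hb hab
  set v : Fin n → ℝ := fun i => q i - p i with hv
  have hkeyC : ∀ τ ∈ Set.Icc (0:ℝ) 1,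
      -2 * ∑ i, ((p i + τ * v i) * (v i * (1 + (p i + τ * v i) ^ 2)⁻¹) ^ 2)
        ≤ A * (∑ i, v i * (1 + (p i + τ * v i) ^ 2)⁻¹) ^ 2 := by
    intro τ hτ
    have hmem : (fun i => p i + τ * v i) ∈ {lam : Fin n → ℝ | c ≤ ∑ i, arctan (lam i)} :=
      seg_mem_aux hE hp hq hτ
    simp only [Set.mem_setOf_eq] at hmem
    set w : Fin n → ℝ := fun i => p i + τ * v i with hw
    set lam : Fin (n+1) → ℝ := Fin.snoc w (A / 2) with hlam
    set u : Fin (n+1) → ℝ := Fin.snoc (fun i => v i * (1 + (w i) ^ 2)⁻¹) 0 with hu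
    have hu0 : u (Fin.last n) = 0 := by rw [hu, Fin.snoc_last]
    have hsum : ∑ i, arctan (lam i) = (∑ i, arctan (w i)) + (π / 2 - d / 2) := by
      rw [Fin.sum_univ_castSucc]
      simp only [hlam, Fin.snoc_castSucc, Fin.snoc_last]
      rw [harc]
    have hmem' : c ≤ ∑ i, arctan (w i) := hmem
    rw [hc_def] at hmem'
    have hk := key lam u (Fin.last n) hu0 (by
      rw [hsum]
      push_cast
      nlinarith [hmem', hdδ, hd0, hπ])
    rw [Fin.sum_univ_castSucc, Fin.sum_univ_castSucc] at hk
    simp only [hlam, hu, Fin.snoc_castSucc, Fin.snoc_last] at hk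
    have : 0 ≤ ∑ i, (w i * (v i * (1 + (w i) ^ 2)⁻¹) ^ 2)
        + (A / 2) * (∑ i, v i * (1 + (w i) ^ 2)⁻¹) ^ 2 := by
      calc (0:ℝ) ≤ _ := hk
        _ = ∑ i, (w i * (v i * (1 + (w i) ^ 2)⁻¹) ^ 2)
          + (A / 2) * (∑ i, v i * (1 + (w i) ^ 2)⁻¹) ^ 2 := by ring
    linarith
  have hcc := concave_seg p v hA hkeyC
  have h0 : (0:ℝ) ∈ Set.Icc (0:ℝ) 1 := by constructor <;> norm_num
  have h1 : (1:ℝ) ∈ Set.Icc (0:ℝ) 1 := by constructor <;> norm_num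
  have hcomb := hcc.2 h0 h1 ha hb hab
  have hb' : a • (0:ℝ) + b • (1:ℝ) = b := by simp [smul_eq_mul]
  rw [hb'] at hcomb
  have e0 : (fun τ => -Real.exp (-A * ∑ i, arctan (p i + τ * v i))) 0
      = -Real.exp (-A * ∑ i, arctan (p i)) := by simp
  have e1 : (fun τ => -Real.exp (-A * ∑ i, arctan (p i + τ * v i))) 1
      = -Real.exp (-A * ∑ i, arctan (q i)) := by
    show -Real.exp (-A * ∑ i, arctan (p i + 1 * v i)) = -Real.exp (-A * ∑ i, arctan (q i))
    congr 2
    congr 1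
    apply Finset.sum_congr rfl
    intro i _
    congr 1
    show p i + 1 * (q i - p i) = q i
    ring
  have eb : (fun τ => -Real.exp (-A * ∑ i, arctan (p i + τ * v i))) b
      = -Real.exp (-A * ∑ i, arctan ((a • p + b • q) i)) := by
    show -Real.exp (-A * ∑ i, arctan (p i + b * v i))
        = -Real.exp (-A * ∑ i, arctan ((a • p + b • q) i))
    congr 2
    congr 1
    apply Finset.sum_congr rfl
    intro i _
    congr 1
    have hab' : a = 1 - b := by linarith
    show p i + b * (q i - p i) = a • p i + b • q i
    rw [smul_eq_mul, smul_eq_mul, hab']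
    ring
  rw [e0, e1, eb] at hcomb
  show a • (-Real.exp (-A * ∑ i, arctan (p i))) + b • (-Real.exp (-A * ∑ i, arctan (q i)))
      ≤ -Real.exp (-A * ∑ i, arctan ((a • p + b • q) i))
  exact hcomb
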